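/- arXiv:1307.2751 — 2 statements merged into one kernel-verified Lean document; each statement's English description precedes it below -/
import Mathlib

section
/- Let μ be a finite measure space with infinitely many disjoint sets of positive measure, i.e., there exist pairwise disjoint measurable sets A_1, A_2, ... with μ(A_n) > 0 and ⋃ A_n = Ω. Then the function f = Σ_k (ln k)·1_{B_k}, where (B_k) is a suitable subsequence of (A_n) with μ(B_k) ≤ 1/k², belongs to L^p(μ) for every p ≥ 1 but is essentially unbounded; consequently L^∞(μ) ⊊ L^ω(μ). -/
open MeasureTheory ENNReal NNReal

theorem Linfty_strictly_contained_in_Lomega {Ω : Type*} [MeasurableSpace Ω]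
    (μ : Measure Ω) [IsFiniteMeasure μ] (A : ℕ → Set Ω)
    (hmeas : ∀ n, MeasurableSet (A n)) (hdisj : Pairwise (Function.onFun Disjoint A))
    (hpos : ∀ n, 0 < μ (A n)) (hcover : (⋃ n, A n) = Set.univ) :
    ∃ f : Ω → ℝ, (∀ p : ℝ, 1 ≤ p → MemLp f (ENNReal.ofReal p) μ) ∧ ¬ MemLp f ∞ μ := by
  -- μ (A n) → 0
  have htsum : ∑' n, μ (A n) ≠ ∞ := by
    rw [← measure_iUnion hdisj hmeas]
    exact (measure_lt_top μ _).ne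
  have htend : Filter.Tendsto (fun n => μ (A n)) Filter.atTop (nhds 0) :=
    ENNReal.tendsto_atTop_zero_of_tsum_ne_top htsum
  -- extract a subsequence with μ (A (φ k)) ≤ 2⁻¹ ^ k
  obtain ⟨φ, hφ, hφle⟩ :=
    Filter.extraction_forall_of_eventually (P := fun k n => μ (A n) ≤ 2⁻¹ ^ k)
      (fun k => by
        have hpos2 : (0 : ℝ≥0∞) < 2⁻¹ ^ k :=
          ENNReal.pow_pos (ENNReal.inv_pos.2 ENNReal.ofNat_ne_top) k
        exact (htend.eventually_le_const hpos2))
  set B : ℕ → Set Ω := fun k => A (φ k) with hB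
  have hBmeas : ∀ k, MeasurableSet (B k) := fun k => hmeas (φ k)
  have hBdisj : Pairwise (Function.onFun Disjoint B) :=
    fun i j hij => hdisj (hφ.injective.ne hij)
  -- the function, built in ℝ≥0∞ first
  set g : Ω → ℝ≥0∞ := fun ω => ∑' k, (B k).indicator (fun _ => (k : ℝ≥0∞)) ω with hg
  have hgk : ∀ k, ∀ ω ∈ B k, g ω = k := by
    intro k ω hω
    have : ∀ j, j ≠ k → (B j).indicator (fun _ => (j : ℝ≥0∞)) ω = 0 := by
      intro j hj
      have : ω ∉ B j := fun hωj => (hBdisj hj).le_bot ⟨hωj, hω⟩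
      simp [Set.indicator_of_notMem this]
    show (∑' j : ℕ, (B j).indicator (fun _ => (j : ℝ≥0∞)) ω) = (k : ℝ≥0∞)
    rw [tsum_eq_single k this, Set.indicator_of_mem hω]
  have hg0 : ∀ ω, ω ∉ (⋃ k, B k) → g ω = 0 := by
    intro ω hω
    have : ∀ k, (B k).indicator (fun _ => (k : ℝ≥0∞)) ω = 0 := by
      intro k
      have : ω ∉ B k := fun h => hω (Set.mem_iUnion.2 ⟨k, h⟩)
      simp [Set.indicator_of_notMem this]
    simp [hg, this]
  have hgne : ∀ ω, g ω ≠ ∞ := by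
    intro ω
    by_cases hω : ω ∈ ⋃ k, B k
    · obtain ⟨k, hk⟩ := Set.mem_iUnion.1 hω
      rw [hgk k ω hk]; exact ENNReal.natCast_ne_top k
    · rw [hg0 ω hω]; exact ENNReal.zero_ne_top
  have hgmeas : Measurable g :=
    Measurable.ennreal_tsum fun k =>
      (measurable_const.indicator (hBmeas k))
  set f : Ω → ℝ := fun ω => (g ω).toReal with hf
  have hfmeas : Measurable f := hgmeas.ennreal_toReal
  have henorm : ∀ ω, (‖f ω‖₊ : ℝ≥0∞) = g ω := by
    intro ω
    rw [hf]
    rw [← enorm_eq_nnnorm, Real.enorm_eq_ofReal ENNReal.toReal_nonneg, ENNReal.ofReal_toReal (hgne ω)]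
  refine ⟨f, ?_, ?_⟩
  · -- membership in every L^p
    intro p hp
    have hp0 : (0 : ℝ) < p := lt_of_lt_of_le one_pos hp
    have hq0 : ENNReal.ofReal p ≠ 0 := by
      simp [ENNReal.ofReal_eq_zero, not_le, hp0]
    have hqtop : ENNReal.ofReal p ≠ ∞ := ENNReal.ofReal_ne_top
    refine ⟨hfmeas.aestronglyMeasurable, ?_⟩
    rw [eLpNorm_eq_lintegral_rpow_enorm_toReal hq0 hqtop]
    have hqt : (ENNReal.ofReal p).toReal = p := ENNReal.toReal_ofReal hp0.le
    rw [hqt]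
    refine ENNReal.rpow_lt_top_of_nonneg (by positivity) ?_
    -- compute the integral
    have hcongr : ∫⁻ ω, ‖f ω‖ₑ ^ p ∂μ = ∫⁻ ω, g ω ^ p ∂μ := by
      refine lintegral_congr fun ω => ?_
      rw [enorm_eq_nnnorm, henorm ω]
    rw [hcongr]
    have hU : MeasurableSet (⋃ k, B k) := MeasurableSet.iUnion hBmeas
    rw [← lintegral_add_compl (fun ω => g ω ^ p) hU]
    have hcompl : ∫⁻ ω in (⋃ k, B k)ᶜ, g ω ^ p ∂μ = 0 := by
      rw [setLIntegral_congr_fun_ae hU.compl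
        (Filter.Eventually.of_forall fun ω hω => by
          rw [hg0 ω hω, ENNReal.zero_rpow_of_pos hp0] )]
      simp
    rw [hcompl, add_zero]
    rw [lintegral_iUnion hBmeas hBdisj]
    have hterm : ∀ k, ∫⁻ ω in B k, g ω ^ p ∂μ = (k : ℝ≥0∞) ^ p * μ (B k) := by
      intro k
      rw [setLIntegral_congr_fun_ae (hBmeas k)
        (Filter.Eventually.of_forall fun ω hω => by rw [hgk k ω hω])]
      simp [lintegral_const, Measure.restrict_apply, MeasurableSet.univ]
    have hsum : ∑' k : ℕ, (k : ℝ≥0∞) ^ (⌈p⌉₊ : ℝ) * 2⁻¹ ^ k ≠ ∞ := by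
      have h1 : ∀ k : ℕ, (k : ℝ≥0∞) ^ (⌈p⌉₊ : ℝ) * 2⁻¹ ^ k
          = (((k : ℝ≥0) ^ ⌈p⌉₊ * 2⁻¹ ^ k : ℝ≥0) : ℝ≥0∞) := by
        intro k
        rw [ENNReal.rpow_natCast]
        push_cast
        ring
      rw [tsum_congr h1, ENNReal.tsum_coe_ne_top_iff_summable, ← NNReal.summable_coe]
      have h2 : Summable fun k : ℕ => (k : ℝ) ^ ⌈p⌉₊ * (2⁻¹ : ℝ) ^ k :=
        summable_pow_mul_geometric_of_norm_lt_one ⌈p⌉₊ (by norm_num)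
      exact h2.congr fun k => by push_cast; ring
    have hle : ∑' k : ℕ, ∫⁻ ω in B k, g ω ^ p ∂μ
        ≤ ∑' k : ℕ, (k : ℝ≥0∞) ^ (⌈p⌉₊ : ℝ) * 2⁻¹ ^ k := by
      refine ENNReal.tsum_le_tsum fun k => ?_
      rw [hterm k]
      refine mul_le_mul' ?_ (hφle k)
      rcases Nat.eq_zero_or_pos k with hk | hk
      · subst hk
        simp [ENNReal.zero_rpow_of_pos hp0,
          ENNReal.zero_rpow_of_pos (by positivity : (0:ℝ) < (⌈p⌉₊ : ℝ))]
      · exact ENNReal.rpow_le_rpow_of_exponent_le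
          (by exact_mod_cast Nat.one_le_cast.2 hk) (Nat.le_ceil p)
    exact ne_top_of_le_ne_top hsum hle
  · -- not essentially bounded
    intro hmem
    have hlt : eLpNormEssSup f μ < ∞ := by
      have := hmem.2
      rwa [eLpNorm_exponent_top] at this
    obtain ⟨k, hk⟩ := ENNReal.exists_nat_gt hlt.ne
    have hae : ∀ᵐ ω ∂μ, (‖f ω‖₊ : ℝ≥0∞) ≤ eLpNormEssSup f μ := ae_le_eLpNormEssSup
    have hsub : B k ⊆ {ω | ¬ (‖f ω‖₊ : ℝ≥0∞) ≤ eLpNormEssSup f μ} := by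
      intro ω hω
      simp only [Set.mem_setOf_eq, not_le]
      rw [henorm ω, hgk k ω hω]
      exact hk
    have h0 : μ (B k) = 0 := measure_mono_null hsub (by
      have := hae
      rw [Filter.eventually_iff, mem_ae_iff] at this
      simpa [Set.compl_setOf] using this)
    exact (hpos (φ k)).ne' h0
end

section
/- Let μ be a finite measure and suppose a net (or sequence) f_α in L^ω(μ) = ⋂_{p≥1}L^p(μ) is order-convergent to f ∈ L^ω(μ): there exist g_α ≤ f_α ≤ h_α with g_α ↑ f and h_α ↓ f. Then ‖f_α − f‖_p → 0 for every p ≥ 1. -/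
open MeasureTheory ENNReal Filter

/-- The Arens space `L^ω(μ) = ⋂_{p ≥ 1} L^p(μ)` as a predicate. -/
def MemLomega {Ω : Type*} [MeasurableSpace Ω] (f : Ω → ℝ) (μ : Measure Ω) : Prop :=
  ∀ p : ℝ, 1 ≤ p → MemLp f (ENNReal.ofReal p) μ

theorem order_convergence_implies_Lp_convergence {Ω : Type*} [MeasurableSpace Ω]
    (μ : Measure Ω) [IsFiniteMeasure μ]
    (f g h : ℕ → Ω → ℝ) (F : Ω → ℝ)
    (hf : ∀ n, MemLomega (f n) μ) (hg : ∀ n, MemLomega (g n) μ)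
    (hh : ∀ n, MemLomega (h n) μ) (hF : MemLomega F μ)
    (hsq : ∀ᵐ ω ∂μ, ∀ n, g n ω ≤ f n ω ∧ f n ω ≤ h n ω)
    (hgmono : ∀ᵐ ω ∂μ, Monotone (fun n => g n ω) ∧
      Tendsto (fun n => g n ω) atTop (nhds (F ω)))
    (hhanti : ∀ᵐ ω ∂μ, Antitone (fun n => h n ω) ∧
      Tendsto (fun n => h n ω) atTop (nhds (F ω))) :
    ∀ p : ℝ, 1 ≤ p →
      Tendsto (fun n => eLpNorm (f n - F) (ENNReal.ofReal p) μ) atTop (nhds 0) := by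
  intro p hp
  have hp0 : (0 : ℝ) < p := lt_of_lt_of_le one_pos hp
  set q := ENNReal.ofReal p with hq
  have hq0 : q ≠ 0 := by
    simp only [hq, Ne, ENNReal.ofReal_eq_zero, not_le]; exact hp0
  have hqtop : q ≠ ∞ := ENNReal.ofReal_ne_top
  have hqr : q.toReal = p := ENNReal.toReal_ofReal hp0.le
  have hmeas : ∀ n, AEStronglyMeasurable (f n - F) μ := fun n =>
    (hf n p hp).1.sub (hF p hp).1
  -- the dominating function
  set G : Ω → ℝ := fun ω => ‖h 0 ω‖ + ‖g 0 ω‖ with hGdef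
  have hGmem : MemLp G q μ := (hh 0 p hp).norm.add (hg 0 p hp).norm
  have hGfin : (∫⁻ ω, (‖G ω‖₊ : ℝ≥0∞) ^ p ∂μ) ≠ ∞ := by
    have := lintegral_rpow_enorm_lt_top_of_eLpNorm_lt_top hq0 hqtop hGmem.eLpNorm_lt_top
    rw [hqr] at this
    exact this.ne
  -- a.e. combination of hypotheses
  have hae : ∀ᵐ ω ∂μ, (∀ n, g n ω ≤ f n ω ∧ f n ω ≤ h n ω) ∧
      (Monotone (fun n => g n ω) ∧ Tendsto (fun n => g n ω) atTop (nhds (F ω))) ∧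
      (Antitone (fun n => h n ω) ∧ Tendsto (fun n => h n ω) atTop (nhds (F ω))) :=
    hsq.and (hgmono.and hhanti)
  have key : Tendsto (fun n => ∫⁻ ω, (‖(f n - F) ω‖₊ : ℝ≥0∞) ^ p ∂μ) atTop (nhds 0) := by
    have h0 : (0 : ℝ≥0∞) = ∫⁻ _ω, (0 : ℝ≥0∞) ∂μ := (lintegral_zero).symm
    rw [h0]
    refine tendsto_lintegral_of_dominated_convergence'
      (fun ω => (‖G ω‖₊ : ℝ≥0∞) ^ p)
      (fun n => (hmeas n).enorm.pow_const p) ?_ hGfin ?_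
    · -- domination
      intro n
      filter_upwards [hae] with ω hω
      obtain ⟨hs, ⟨hgm, hgt⟩, ⟨hhm, hht⟩⟩ := hω
      have hgle : ∀ m, g m ω ≤ F ω := fun m =>
        ge_of_tendsto hgt (Filter.eventually_atTop.2 ⟨m, fun k hk => hgm hk⟩)
      have hhge : ∀ m, F ω ≤ h m ω := fun m =>
        le_of_tendsto hht (Filter.eventually_atTop.2 ⟨m, fun k hk => hhm hk⟩)
      have h1 : g 0 ω ≤ f n ω := le_trans (hgm (Nat.zero_le n)) (hs n).1
      have h2 : f n ω ≤ h 0 ω := le_trans (hs n).2 (hhm (Nat.zero_le n))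
      have h3 : g 0 ω ≤ F ω := hgle 0
      have h4 : F ω ≤ h 0 ω := hhge 0
      have habs : |f n ω - F ω| ≤ G ω := by
        simp only [hGdef, Real.norm_eq_abs]
        rw [abs_le]
        constructor <;>
          linarith [le_abs_self (h 0 ω), neg_abs_le (h 0 ω),
            le_abs_self (g 0 ω), neg_abs_le (g 0 ω)]
      have hnorm : ‖(f n - F) ω‖ ≤ ‖G ω‖ := by
        simp only [Pi.sub_apply, Real.norm_eq_abs]
        exact le_trans habs (le_abs_self _)
      have hnn : ‖(f n - F) ω‖₊ ≤ ‖G ω‖₊ := by exact_mod_cast hnorm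
      exact ENNReal.rpow_le_rpow (ENNReal.coe_le_coe.2 hnn) hp0.le
    · -- pointwise convergence
      filter_upwards [hae] with ω hω
      obtain ⟨hs, ⟨_, hgt⟩, ⟨_, hht⟩⟩ := hω
      have hft : Tendsto (fun n => f n ω) atTop (nhds (F ω)) :=
        tendsto_of_tendsto_of_tendsto_of_le_of_le hgt hht
          (fun n => (hs n).1) (fun n => (hs n).2)
      have hsub : Tendsto (fun n => (f n - F) ω) atTop (nhds 0) := by
        have := hft.sub (tendsto_const_nhds (x := F ω))
        rw [sub_self] at this
        exact this
      have := (ENNReal.tendsto_coe.2 hsub.nnnorm).ennrpow_const p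
      simpa [ENNReal.zero_rpow_of_pos hp0] using this
  have heq : ∀ n, eLpNorm (f n - F) q μ
      = (∫⁻ ω, (‖(f n - F) ω‖₊ : ℝ≥0∞) ^ p ∂μ) ^ (1 / p) := by
    intro n
    rw [eLpNorm_eq_lintegral_rpow_enorm_toReal hq0 hqtop, hqr]
    rfl
  simp_rw [heq]
  have hfin := key.ennrpow_const (1 / p)
  simpa [ENNReal.zero_rpow_of_pos (show (0:ℝ) < p⁻¹ by positivity)] using hfin
end
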